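/- Let κ be an infinite cardinal and S a set with 2 ≤ |S|. Then any maximal family of pairwise ∼_κ-inequivalent functions from κ to S has cardinality at least 2^κ; if moreover |S| ≤ 2^κ, the number of ∼_κ-equivalence classes of functions κ → S is exactly 2^κ. -/

import Mathlib

universe u

/-- For an infinite `X` of cardinality `κ` and `S` with at least two elements: any maximal
family of pairwise `∼_κ`-inequivalent functions `X → S` has cardinality at least `2^κ`;
and if `|S| ≤ 2^κ` then the number of `∼_κ`-classes of functions `X → S` is exactly `2^κ`. -/
theorem stmt_10 {X S : Type u} [Infinite X] (hS : 2 ≤ Cardinal.mk S) :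
    (∀ B : Set (X → S),
      (∀ f ∈ B, ∀ g ∈ B, f ≠ g → ¬ Cardinal.mk {x | f x ≠ g x} < Cardinal.mk X) →
      (∀ f : X → S, ∃ g ∈ B, Cardinal.mk {x | f x ≠ g x} < Cardinal.mk X) →
      2 ^ Cardinal.mk X ≤ Cardinal.mk B) ∧
    (Cardinal.mk S ≤ 2 ^ Cardinal.mk X →
      Cardinal.mk
        (Quot (fun f g : X → S => Cardinal.mk {x | f x ≠ g x} < Cardinal.mk X)) =
        2 ^ Cardinal.mk X) := by
  classical
  obtain ⟨s₀, s₁, hs⟩ := Cardinal.two_le_iff.mp hS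
  set κ := Cardinal.mk X with hκ
  have hκ0 : Cardinal.aleph0 ≤ κ := Cardinal.aleph0_le_mk X
  have hXX : Cardinal.mk (X × X) = κ := by
    rw [Cardinal.mk_prod]
    simp [Cardinal.mul_eq_self hκ0]
    rfl
  obtain ⟨e⟩ := Cardinal.eq.mp hXX
  -- the family of 2^κ pairwise inequivalent functions
  set F : (X → Bool) → X → S := fun h x => if h (e.symm x).1 then s₀ else s₁ with hFdef
  have hF : ∀ h h' : X → Bool, h ≠ h' →
      κ ≤ Cardinal.mk {x | F h x ≠ F h' x} := by
    intro h h' hne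
    obtain ⟨a, ha⟩ := Function.ne_iff.mp hne
    have inj : Function.Injective (fun y : X => (⟨e (a, y), by
        simp only [Set.mem_setOf_eq, hFdef, e.symm_apply_apply]
        rcases Bool.eq_false_or_eq_true (h a) with hb | hb <;>
          rcases Bool.eq_false_or_eq_true (h' a) with hb' | hb' <;>
            simp_all <;> exact Ne.symm hs⟩ : {x | F h x ≠ F h' x})) := by
      intro y z hyz
      have h2 : e (a, y) = e (a, z) := congrArg Subtype.val hyz
      simpa using e.injective h2
    exact Cardinal.mk_le_of_injective inj
  have hBool : Cardinal.mk (X → Bool) = 2 ^ κ := by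
    rw [Cardinal.mk_arrow]
    simp
    rfl
  have hunion : ∀ f g w : X → S,
      Cardinal.mk {x | f x ≠ w x} < κ → Cardinal.mk {x | g x ≠ w x} < κ →
      Cardinal.mk {x | f x ≠ g x} < κ := by
    intro f g w h1 h2
    have hsub : {x | f x ≠ g x} ⊆ {x | f x ≠ w x} ∪ {x | g x ≠ w x} := by
      intro x hx
      by_contra hc
      simp only [Set.mem_union, Set.mem_setOf_eq, not_or, not_not] at hc
      exact hx (hc.1.trans hc.2.symm)
    calc Cardinal.mk {x | f x ≠ g x}
        ≤ Cardinal.mk ({x | f x ≠ w x} ∪ {x | g x ≠ w x} : Set X) :=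
          Cardinal.mk_le_mk_of_subset hsub
      _ ≤ Cardinal.mk {x | f x ≠ w x} + Cardinal.mk {x | g x ≠ w x} :=
          Cardinal.mk_union_le _ _
      _ < κ := Cardinal.add_lt_of_lt hκ0 h1 h2
  constructor
  · intro B hB1 hB2
    choose g hgB hglt using hB2
    have hinj : Function.Injective (fun h : X → Bool => (⟨g (F h), hgB _⟩ : B)) := by
      intro h h' hhh
      by_contra hne
      have heq : g (F h) = g (F h') := congrArg Subtype.val hhh
      have : Cardinal.mk {x | F h x ≠ F h' x} < κ := by
        refine hunion _ _ (g (F h)) (hglt (F h)) ?_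
        rw [heq]; exact hglt (F h')
      exact absurd this (not_lt.mpr (hF h h' hne))
    calc (2 : Cardinal) ^ κ = Cardinal.mk (X → Bool) := hBool.symm
      _ ≤ Cardinal.mk B := Cardinal.mk_le_of_injective hinj
  · intro hS2
    set r : (X → S) → (X → S) → Prop :=
      fun f g => Cardinal.mk {x | f x ≠ g x} < κ with hrdef
    have hrequiv : Equivalence r := by
      refine ⟨fun f => ?_, fun {f g} hfg => ?_, fun {f g w} h1 h2 => ?_⟩
      · have hset : {x | f x ≠ f x} = (∅ : Set X) := by simp
        show Cardinal.mk {x | f x ≠ f x} < κ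
        rw [hset]
        simp only [Cardinal.mk_emptyCollection]
        exact lt_of_lt_of_le Cardinal.aleph0_pos hκ0
      · have hset : {x | g x ≠ f x} = {x | f x ≠ g x} := by ext x; exact ne_comm
        show Cardinal.mk {x | g x ≠ f x} < κ
        rw [hset]; exact hfg
      · have hset : {x | w x ≠ g x} = {x | g x ≠ w x} := by ext x; exact ne_comm
        show Cardinal.mk {x | f x ≠ w x} < κ
        exact hunion f w g h1 (by rw [hset]; exact h2)
    refine le_antisymm ?_ ?_
    · calc Cardinal.mk (Quot r) ≤ Cardinal.mk (X → S) := Cardinal.mk_quot_le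
        _ = Cardinal.mk S ^ κ := (Cardinal.power_def S X).symm
        _ ≤ (2 ^ κ) ^ κ := by exact Cardinal.power_le_power_right hS2
        _ = 2 ^ (κ * κ) := Cardinal.power_mul.symm
        _ = 2 ^ κ := by rw [Cardinal.mul_eq_self hκ0]
    · have hinj : Function.Injective (fun h : X → Bool => Quot.mk r (F h)) := by
        intro h h' hhh
        by_contra hne
        have : r (F h) (F h') := (hrequiv.eqvGen_iff).mp (Quot.eq.mp hhh)
        exact absurd this (not_lt.mpr (hF h h' hne))
      calc (2 : Cardinal) ^ κ = Cardinal.mk (X → Bool) := hBool.symm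
        _ ≤ Cardinal.mk (Quot r) := Cardinal.mk_le_of_injective hinj
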